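/- Let Φ ∈ C(Ω, X)*_1 be a w*-w point of continuity, written (as guaranteed by the structure theorem) as Φ = ∑_{i=1}^∞ α_i (δ_{k_i} ⊗ x_i*) with α_i ∈ (0,1], ∑ α_i = 1, k_i distinct isolated points of Ω, and x_i* ∈ S(X*). If Φ attains its norm at some f in the unit sphere of C(Ω, X), then x_i*(f(k_i)) = 1 for every i, each x_i* attains its norm on the countable set A = {f(k_i) : i ∈ ℕ} ⊆ X_1, and the closure of A in X is norm compact. -/

import Mathlib

open NormedSpace Filter Topology

variable {Ω : Type*} [TopologicalSpace Ω] [CompactSpace Ω]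
variable {X : Type*} [NormedAddCommGroup X] [NormedSpace ℝ X]

/-- The functional `δ_ω ⊗ x* : f ↦ x*(f ω)` on `C(Ω, X)`. -/
noncomputable def deltaTensor (ω : Ω) (x : StrongDual ℝ X) : StrongDual ℝ C(Ω, X) :=
  LinearMap.mkContinuous
    { toFun := fun f : C(Ω, X) => x (f ω)
      map_add' := fun f g => by simp
      map_smul' := fun c f => by simp }
    ‖x‖ (fun f => by
      calc ‖x (f ω)‖ ≤ ‖x‖ * ‖f ω‖ := x.le_opNorm _
        _ ≤ ‖x‖ * ‖f‖ :=
          mul_le_mul_of_nonneg_left (f.norm_coe_le_norm ω) (norm_nonneg x))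

/-- `x*` in the dual unit ball is a *w\*-w point of continuity*: every net (filter) in the
dual unit ball converging weak\* to `x*` converges weakly to `x*`. -/
def IsWStarWPC {E : Type*} [NormedAddCommGroup E] [NormedSpace ℝ E]
    (x : StrongDual ℝ E) : Prop :=
  ∀ l : Filter (StrongDual ℝ E), l.NeBot → (∀ᶠ φ in l, ‖φ‖ ≤ 1) →
    (∀ v : E, Tendsto (fun φ : StrongDual ℝ E => φ v) l (𝓝 (x v))) →
    ∀ Λ : StrongDual ℝ (StrongDual ℝ E), Tendsto (fun φ : StrongDual ℝ E => Λ φ) l (𝓝 (Λ x))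

/-- **Necessary conditions for norm attainment of a w\*-w PC.**  Let
`Φ = ∑ α_i (δ_{k_i} ⊗ x_i*)` be a w\*-w PC in the dual unit ball of `C(Ω, X)` with
`α_i ∈ (0, 1]`, `∑ α_i = 1`, `k_i` distinct isolated points and `x_i* ∈ S(X*)`.  If `Φ`
attains its norm at `f ∈ S(C(Ω, X))` (`Φ f = ‖Φ‖ = 1`), then `x_i*(f(k_i)) = 1` for every
`i` (so each `x_i*` attains its norm on the countable set `A = {f(k_i)} ⊆ X₁`) and the
closure of `A` is norm compact. -/
theorem norm_attaining_wStarWPC_necessary [T2Space Ω] [CompleteSpace X]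
    (Φ : StrongDual ℝ C(Ω, X)) (hΦball : ‖Φ‖ ≤ 1) (hpc : IsWStarWPC Φ)
    (α : ℕ → ℝ) (hα : ∀ i, α i ∈ Set.Ioc (0 : ℝ) 1) (hαsum : HasSum α 1)
    (k : ℕ → Ω) (hk : Function.Injective k) (hiso : ∀ i, IsOpen ({k i} : Set Ω))
    (x : ℕ → StrongDual ℝ X) (hx : ∀ i, ‖x i‖ = 1)
    (hrep : ∀ f : C(Ω, X), Φ f = ∑' i, α i * (deltaTensor (k i) (x i)) f)
    (f : C(Ω, X)) (hf : ‖f‖ = 1) (hatt : Φ f = 1) :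
    (∀ i, (x i) (f (k i)) = 1) ∧
      (∀ i, ‖f (k i)‖ ≤ 1) ∧
      IsCompact (closure (Set.range fun i => f (k i))) := by
  have hfle : ∀ i, ‖f (k i)‖ ≤ 1 := fun i => hf ▸ f.norm_coe_le_norm (k i)
  set g : ℕ → ℝ := fun i => α i * (x i) (f (k i)) with hg
  have hgle : ∀ i, g i ≤ α i := by
    intro i
    have h1 : (x i) (f (k i)) ≤ 1 := by
      calc (x i) (f (k i)) ≤ ‖(x i) (f (k i))‖ := le_abs_self _
        _ ≤ ‖x i‖ * ‖f (k i)‖ := (x i).le_opNorm _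
        _ ≤ 1 := by rw [hx i]; simpa using hfle i
    calc g i ≤ α i * 1 := mul_le_mul_of_nonneg_left h1 (hα i).1.le
      _ = α i := mul_one _
  have hgsummable : Summable g := by
    apply Summable.of_norm_bounded hαsum.summable
    intro i
    have h1 : ‖(x i) (f (k i))‖ ≤ 1 := by
      calc ‖(x i) (f (k i))‖ ≤ ‖x i‖ * ‖f (k i)‖ := (x i).le_opNorm _
        _ ≤ 1 := by rw [hx i]; simpa using hfle i
    rw [norm_mul, Real.norm_of_nonneg (hα i).1.le]
    calc α i * ‖(x i) (f (k i))‖ ≤ α i * 1 := by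
          exact mul_le_mul_of_nonneg_left h1 (hα i).1.le
      _ = α i := mul_one _
  have htsum : ∑' i, g i = 1 := by
    rw [← hatt, hrep f]; rfl
  have hgsum : HasSum g 1 := htsum ▸ hgsummable.hasSum
  have heq : ∀ i, g i = α i := by
    intro i
    by_contra hne
    have : (1 : ℝ) < 1 := hasSum_lt hgle (lt_of_le_of_ne (hgle i) hne) hgsum hαsum
    exact absurd this (lt_irrefl _)
  refine ⟨fun i => ?_, hfle, ?_⟩
  · have h := heq i
    have hαi : α i ≠ 0 := (hα i).1.ne'
    have : α i * (x i) (f (k i)) = α i * 1 := by rw [mul_one]; exact h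
    exact mul_left_cancel₀ hαi this
  · have hcomp : IsCompact (f '' Set.univ) :=
      (isCompact_univ).image f.continuous
    apply hcomp.closure_of_subset
    rintro _ ⟨i, rfl⟩
    exact ⟨k i, trivial, rfl⟩
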